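/- Let n ≥ 2 and k ≥ 1. Suppose (m_{ij})_{1 ≤ i < j ≤ n} are nonnegative integers such that for every vertex i, the sum of m_{ij} over all j ≠ i (interpreting m_{ji} for j < i) equals 2k. Then there exist nonnegative integer families (m^{(1)}), …, (m^{(k)}) with m_{ij} = m^{(1)}_{ij} + ⋯ + m^{(k)}_{ij} such that for each t and each vertex i, the sum of m^{(t)}_{ij} over all j ≠ i equals 2. -/

import Mathlib

open Finset

private lemma exists_cycle {n : ℕ} (m : Fin n → Fin n → ℕ)
    (hsym : ∀ i j, m i j = m j i) (hdiag : ∀ i, m i i = 0)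
    (heven : ∀ i, Even (∑ j, m i j)) (hne : m ≠ 0) :
    ∃ (L : ℕ) (c : Fin (L+2) → Fin n), Function.Injective c ∧
      (∀ t, 0 < m (c t) (c (t+1))) ∧ (L = 0 → 2 ≤ m (c 0) (c 1)) := by
  classical
  -- get an edge
  obtain ⟨a, ha⟩ : ∃ a, m a ≠ 0 := by
    by_contra h
    push_neg at h
    exact hne (funext fun a => h a)
  obtain ⟨b, hab⟩ : ∃ b, m a b ≠ 0 := by
    by_contra h
    push_neg at h
    exact ha (funext fun b => h b)
  have haneb : a ≠ b := by
    intro h; rw [h] at hab; exact hab (hdiag b)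
  have hn2 : 2 ≤ n := by
    have : Nontrivial (Fin n) := ⟨a, b, haneb⟩
    have := Fintype.one_lt_card_iff_nontrivial.mpr this
    simp at this; omega
  -- paths
  set P : ℕ → Prop := fun p => ∃ c : Fin (p+1) → Fin n, Function.Injective c ∧
      ∀ t : Fin p, 0 < m (c t.castSucc) (c t.succ) with hP
  have hP1 : P 1 := by
    refine ⟨![a, b], ?_, ?_⟩
    · intro x y hxy
      fin_cases x <;> fin_cases y <;> simp_all
    · intro t
      fin_cases t
      simpa using Nat.pos_of_ne_zero hab
  have hbound : ∀ p, P p → p + 1 ≤ n := by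
    rintro p ⟨c, hcinj, -⟩
    have := Fintype.card_le_of_injective c hcinj
    simpa using this
  have hp : P (Nat.findGreatest P (n-1)) := Nat.findGreatest_spec (by omega) hP1
  have hp1 : 1 ≤ Nat.findGreatest P (n-1) := Nat.le_findGreatest (by omega) hP1
  have hmax : ∀ r, Nat.findGreatest P (n-1) < r → r ≤ n-1 → ¬ P r :=
    fun r h1 h2 => Nat.findGreatest_is_greatest h1 h2
  obtain ⟨q, hq⟩ : ∃ q, Nat.findGreatest P (n-1) = q + 1 :=
    ⟨Nat.findGreatest P (n-1) - 1, by omega⟩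
  rw [hq] at hp
  rw [hq] at hmax
  obtain ⟨c, hcinj, hchain⟩ := hp
  set x := c (Fin.last (q+1)) with hx
  set prev := c ((Fin.last q).castSucc) with hprev
  have hxprev : 0 < m prev x := by
    have := hchain (Fin.last q)
    rwa [Fin.succ_last] at this
  have hxnep : prev ≠ x := by
    intro h
    have := hcinj h
    have := congrArg Fin.val this
    simp at this
  -- maximality: all neighbors of x lie on the path
  have hclosed : ∀ u, 0 < m x u → ∃ i : Fin (q+2), c i = u := by
    intro u hu
    by_contra hnotin
    push_neg at hnotin
    set c' : Fin (q+3) → Fin n := Fin.snoc c u with hc'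
    have hinj' : Function.Injective c' := by
      intro i j hij
      induction i using Fin.lastCases with
      | last =>
        induction j using Fin.lastCases with
        | last => rfl
        | cast j =>
          rw [hc', Fin.snoc_last, Fin.snoc_castSucc] at hij
          exact absurd hij.symm (hnotin j)
      | cast i =>
        induction j using Fin.lastCases with
        | last =>
          rw [hc', Fin.snoc_last, Fin.snoc_castSucc] at hij
          exact absurd hij (hnotin i)
        | cast j =>
          rw [hc', Fin.snoc_castSucc, Fin.snoc_castSucc] at hij
          exact congrArg Fin.castSucc (hcinj hij)
    have hchain' : ∀ t : Fin (q+2), 0 < m (c' t.castSucc) (c' t.succ) := by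
      intro t
      induction t using Fin.lastCases with
      | last =>
        rw [hc', Fin.succ_last, Fin.snoc_last, Fin.snoc_castSucc]
        exact hu
      | cast t =>
        rw [hc', Fin.succ_castSucc, Fin.snoc_castSucc, Fin.snoc_castSucc]
        exact hchain t
    have hP2 : P (q+2) := ⟨c', hinj', hchain'⟩
    have hle : q + 2 ≤ n - 1 := by
      have := hbound _ hP2
      omega
    exact hmax (q+2) (by omega) hle hP2
  by_cases h2 : 2 ≤ m x prev
  · -- doubled edge: 2-cycle
    refine ⟨0, fun t => if t.val = 0 then x else prev, ?_, ?_, fun _ => ?_⟩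
    · intro i j hij
      have hi := i.isLt
      have hj := j.isLt
      by_cases h1 : i.val = 0 <;> by_cases hh2 : j.val = 0
      · exact Fin.ext (by omega)
      · simp only [h1, hh2, if_true, if_false] at hij
        exact absurd hij.symm hxnep
      · simp only [h1, hh2, if_true, if_false] at hij
        exact absurd hij hxnep
      · exact Fin.ext (by omega)
    · intro t
      have hi := t.isLt
      have hadd : ((t + 1 : Fin 2)).val = (t.val + 1) % 2 := by
        rw [Fin.val_add, Fin.val_one]
      by_cases ht : t.val = 0
      · have h1 : ((t + 1 : Fin 2)).val = 1 := by rw [hadd, ht]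
        simp only [ht, h1, if_true]
        norm_num
        omega
      · have h1 : ((t + 1 : Fin 2)).val = 0 := by rw [hadd]; omega
        simp only [ht, h1, if_true, if_false]
        norm_num
        rw [hsym prev x]
        omega
    · norm_num
      exact h2
  · -- m x prev = 1; even degree forces another neighbor
    have hmxp : m x prev = 1 := by
      have := hxprev
      rw [hsym prev x] at this
      omega
    obtain ⟨u, hune, hu⟩ : ∃ u, u ≠ prev ∧ 0 < m x u := by
      by_contra h
      push_neg at h
      have hsum : ∑ j, m x j = m x prev := by
        refine Finset.sum_eq_single prev (fun j _ hj => ?_) (fun h => absurd (mem_univ prev) h)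
        have := h j hj
        omega
      have := heven x
      rw [hsum, hmxp] at this
      exact (Nat.not_even_one) this
    have hunex : u ≠ x := by
      intro h
      rw [h] at hu
      rw [hdiag x] at hu
      exact Nat.lt_irrefl 0 hu
    obtain ⟨i, hiu⟩ := hclosed u hu
    have hival : i.val < q := by
      have h1 : i.val ≠ q + 1 := by
        intro h
        apply hunex
        rw [← hiu, hx]
        congr 1
        exact Fin.ext h
      have h2 : i.val ≠ q := by
        intro h
        apply hune
        rw [← hiu, hprev]
        congr 1
        exact Fin.ext (by simpa using h)
      have := i.isLt
      omega
    set s := i.val with hs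
    refine ⟨q - s, fun t => c ⟨s + t.val, by have := t.isLt; omega⟩, ?_, ?_, ?_⟩
    · intro t t' htt
      have := hcinj htt
      have h := congrArg Fin.val this
      simp only at h
      exact Fin.ext (by omega)
    · intro t
      dsimp only
      have htv := t.isLt
      have hadd : ((t + 1 : Fin (q - s + 2))).val = (t.val + 1) % (q - s + 2) := by
        rw [Fin.val_add, Fin.val_one]
      by_cases hcase : t.val = q - s + 1
      · have h0 : ((t + 1 : Fin (q - s + 2))).val = 0 := by
          rw [hadd, hcase, Nat.mod_self]
        convert hu using 2
        · rw [hx]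
          congr 1
          exact Fin.ext (by simp only [Fin.val_last]; omega)
        · rw [← hiu]
          congr 1
          exact Fin.ext (by simp only [h0]; omega)
      · have h0 : ((t + 1 : Fin (q - s + 2))).val = t.val + 1 := by
          rw [hadd]
          exact Nat.mod_eq_of_lt (by omega)
        have hkey := hchain ⟨s + t.val, by omega⟩
        rw [Fin.castSucc_mk, Fin.succ_mk] at hkey
        convert hkey using 3
        exact Fin.ext (by simp only [h0]; omega)
    · intro h
      omega

private lemma euler_orient {n : ℕ} :
    ∀ (N : ℕ) (m : Fin n → Fin n → ℕ), (∑ i, ∑ j, m i j ≤ N) →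
    (∀ i j, m i j = m j i) → (∀ i, m i i = 0) → (∀ i, Even (∑ j, m i j)) →
    ∃ d : Fin n → Fin n → ℕ, (∀ i j, d i j + d j i = m i j) ∧
      (∀ i, ∑ j, d i j = ∑ j, d j i) := by
  intro N
  induction N with
  | zero =>
    intro m htot hsym hdiag heven
    have hz : ∀ i j, m i j = 0 := by
      intro i j
      have h1 : ∑ i, ∑ j, m i j = 0 := Nat.le_zero.mp htot
      have h2 := Finset.sum_eq_zero_iff.mp h1 i (mem_univ i)
      exact Finset.sum_eq_zero_iff.mp h2 j (mem_univ j)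
    exact ⟨fun _ _ => 0, fun i j => by simp [hz], fun i => rfl⟩
  | succ N ih =>
    intro m htot hsym hdiag heven
    by_cases hm : m = 0
    · subst hm
      exact ⟨fun _ _ => 0, fun i j => by simp, fun i => rfl⟩
    obtain ⟨L, c, hcinj, hchain, h2c⟩ := exists_cycle m hsym hdiag heven hm
    classical
    set dinc : Fin n → Fin n → ℕ :=
      fun i j => ∑ t : Fin (L+2), if c t = i ∧ c (t+1) = j then 1 else 0 with hdinc
    set cnt : Fin n → ℕ := fun i => ∑ t : Fin (L+2), if c t = i then 1 else 0 with hcnt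
    have hrow : ∀ i, ∑ j, dinc i j = cnt i := by
      intro i
      rw [hdinc, Finset.sum_comm]
      refine Finset.sum_congr rfl fun t _ => ?_
      by_cases h : c t = i
      · simp [h]
      · simp [h]
    have hcol : ∀ i, ∑ j, dinc j i = cnt i := by
      intro i
      rw [hdinc]
      have h1 : ∀ j, ∑ t : Fin (L+2), (if c t = j ∧ c (t+1) = i then 1 else 0) =
          ∑ t : Fin (L+2), if c (t+1) = i ∧ c t = j then 1 else 0 := by
        intro j
        refine Finset.sum_congr rfl fun t _ => ?_
        simp [and_comm]
      simp only [h1]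
      rw [Finset.sum_comm]
      have h2 : ∀ t : Fin (L+2), (∑ j, if c (t+1) = i ∧ c t = j then (1:ℕ) else 0) =
          if c (t+1) = i then 1 else 0 := by
        intro t
        by_cases h : c (t+1) = i
        · simp [h]
        · simp [h]
      rw [Finset.sum_congr rfl fun t _ => h2 t]
      rw [hcnt]
      exact Fintype.sum_equiv (Equiv.addRight 1) _ _ (fun t => rfl)
    have hcnt1 : ∀ i, cnt i ≤ 1 := by
      intro i
      rw [hcnt]
      simp only [Finset.sum_boole]
      rw [Nat.cast_id]
      refine Finset.card_le_one.mpr fun t ht t' ht' => ?_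
      exact hcinj ((mem_filter.mp ht).2.trans (mem_filter.mp ht').2.symm)
    have hone : ∀ i j, dinc i j ≠ 0 → ∃ t, c t = i ∧ c (t+1) = j := by
      intro i j h
      by_contra hc
      push_neg at hc
      apply h
      rw [hdinc]
      refine Finset.sum_eq_zero fun t _ => ?_
      have := hc t
      simp only [ite_eq_right_iff]
      intro ⟨ha, hb⟩
      exact absurd hb (this ha)
    have hd1 : ∀ i j, dinc i j ≤ 1 := by
      intro i j
      calc dinc i j ≤ cnt i := by
            rw [hdinc, hcnt]
            refine Finset.sum_le_sum fun t _ => ?_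
            by_cases h' : c t = i
            · simp only [h', if_true, true_and]
              split <;> omega
            · simp [h']
        _ ≤ 1 := hcnt1 i
    have hsub : ∀ i j, dinc i j + dinc j i ≤ m i j := by
      intro i j
      by_cases hij1 : dinc i j = 0 <;> by_cases hij2 : dinc j i = 0
      · simp [hij1, hij2]
      · obtain ⟨t, ht1, ht2⟩ := hone j i hij2
        have := hchain t
        rw [ht1, ht2, ← hsym i j] at this
        have := hd1 j i
        omega
      · obtain ⟨t, ht1, ht2⟩ := hone i j hij1
        have := hchain t
        rw [ht1, ht2] at this
        have := hd1 i j
        omega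
      · obtain ⟨t0, ht01, ht02⟩ := hone i j hij1
        obtain ⟨t1, ht11, ht12⟩ := hone j i hij2
        have he1 : t1 = t0 + 1 := hcinj (ht11.trans ht02.symm)
        have he2 : t0 = t1 + 1 := hcinj (ht01.trans ht12.symm)
        have hL0 : L = 0 := by
          by_contra hL
          have hval : ((t0 + 1 + 1 : Fin (L+2))).val = t0.val := by
            rw [← he1, ← he2]
          rw [Fin.val_add, Fin.val_one, Fin.val_add, Fin.val_one] at hval
          have h1 := t0.isLt
          rcases Nat.lt_or_ge (t0.val + 1) (L + 2) with h | h
          · rw [Nat.mod_eq_of_lt h] at hval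
            rcases Nat.lt_or_ge (t0.val + 2) (L + 2) with h' | h'
            · rw [Nat.mod_eq_of_lt h'] at hval
              omega
            · have : t0.val + 1 + 1 = L + 2 := by omega
              rw [this, Nat.mod_self] at hval
              omega
          · have : t0.val + 1 = L + 2 := by omega
            rw [this, Nat.mod_self] at hval
            have : (0 + 1) % (L + 2) = 1 := Nat.mod_eq_of_lt (by omega)
            rw [this] at hval
            omega
        subst hL0
        have h2m := h2c rfl
        have ht0v := t0.isLt
        have hd1' := hd1 i j
        have hd2' := hd1 j i
        by_cases h0 : t0.val = 0
        · have : t0 = 0 := Fin.ext h0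
          subst this
          have e1 : (0 + 1 : Fin 2) = 1 := rfl
          rw [e1] at ht02
          rw [← ht01, ← ht02] at hd1' hd2' ⊢
          omega
        · have : t0 = 1 := Fin.ext (by simpa using (by omega : t0.val = 1))
          subst this
          have e1 : (1 + 1 : Fin 2) = 0 := rfl
          rw [e1] at ht02
          rw [← ht01, ← ht02] at hd1' hd2' ⊢
          rw [hsym (c 1) (c 0)]
          omega
    set m' : Fin n → Fin n → ℕ := fun i j => m i j - (dinc i j + dinc j i) with hm'
    have hm'add : ∀ i j, m' i j + (dinc i j + dinc j i) = m i j := by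
      intro i j
      rw [hm']
      exact Nat.sub_add_cancel (hsub i j)
    have hsym' : ∀ i j, m' i j = m' j i := by
      intro i j
      rw [hm']
      simp only
      rw [hsym i j, Nat.add_comm (dinc i j)]
    have hdiag' : ∀ i, m' i i = 0 := by
      intro i
      have := hm'add i i
      rw [hdiag i] at this
      omega
    have hdegsplit : ∀ i, ∑ j, m' i j + 2 * cnt i = ∑ j, m i j := by
      intro i
      have h1 : ∑ j, (m' i j + (dinc i j + dinc j i)) = ∑ j, m i j :=
        Finset.sum_congr rfl fun j _ => hm'add i j
      rw [Finset.sum_add_distrib, Finset.sum_add_distrib, hrow i, hcol i] at h1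
      omega
    have heven' : ∀ i, Even (∑ j, m' i j) := by
      intro i
      obtain ⟨r, hr⟩ := heven i
      have := hdegsplit i
      exact ⟨r - cnt i, by omega⟩
    have htot' : ∑ i, ∑ j, m' i j ≤ N := by
      have h1 : ∑ i, ∑ j, (m' i j + (dinc i j + dinc j i)) = ∑ i, ∑ j, m i j :=
        Finset.sum_congr rfl fun i _ => Finset.sum_congr rfl fun j _ => hm'add i j
      simp only [Finset.sum_add_distrib] at h1
      have hpos : 1 ≤ ∑ i, ∑ j, dinc i j := by
        have hterm : 1 ≤ dinc (c 0) (c (0+1)) := by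
          rw [hdinc]
          refine Finset.single_le_sum (f := fun t => if c t = c 0 ∧ c (t+1) = c (0+1) then (1:ℕ) else 0)
            (fun t _ => Nat.zero_le _) (mem_univ 0) |>.trans_eq' ?_
          simp
        calc (1:ℕ) ≤ dinc (c 0) (c (0+1)) := hterm
          _ ≤ ∑ j, dinc (c 0) j := Finset.single_le_sum (fun j _ => Nat.zero_le _) (mem_univ _)
          _ ≤ ∑ i, ∑ j, dinc i j := Finset.single_le_sum
              (f := fun i => ∑ j, dinc i j) (fun i _ => Nat.zero_le _) (mem_univ _)
      omega
    obtain ⟨d', hd'1, hd'2⟩ := ih m' htot' hsym' hdiag' heven'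
    refine ⟨fun i j => d' i j + dinc i j, fun i j => ?_, fun i => ?_⟩
    · show d' i j + dinc i j + (d' j i + dinc j i) = m i j
      have h1 := hd'1 i j
      have h2 := hm'add i j
      omega
    · rw [Finset.sum_add_distrib, Finset.sum_add_distrib, hrow i, hcol i, hd'2 i]


private lemma birkhoff {n : ℕ} :
    ∀ (k : ℕ) (d : Fin n → Fin n → ℕ), (∀ i, ∑ j, d i j = k) → (∀ j, ∑ i, d i j = k) →
    ∃ σ : Fin k → Equiv.Perm (Fin n),
      ∀ i j, d i j = ∑ t, if σ t i = j then 1 else 0 := by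
  intro k
  induction k with
  | zero =>
    intro d hr _
    refine ⟨finZeroElim, fun i j => ?_⟩
    have h0 : ∑ j, d i j = 0 := hr i
    have : d i j = 0 := by
      have := Finset.sum_eq_zero_iff.mp h0 j (mem_univ j)
      exact this
    simp [this]
  | succ k ih =>
    intro d hr hc
    classical
    set T : Fin n → Finset (Fin n) := fun i => univ.filter (fun j => 0 < d i j) with hT
    have hall : ∀ s : Finset (Fin n), #s ≤ #(s.biUnion T) := by
      intro s
      have h1 : ∀ i ∈ s, ∑ j, d i j = ∑ j ∈ s.biUnion T, d i j := by
        intro i hi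
        refine (Finset.sum_subset (subset_univ _) ?_).symm
        intro j _ hj
        by_contra hne
        exact hj (mem_biUnion.mpr ⟨i, hi, mem_filter.mpr ⟨mem_univ j, Nat.pos_of_ne_zero hne⟩⟩)
      have hkey : (k+1) * #s ≤ (k+1) * #(s.biUnion T) := by
        calc (k+1) * #s = ∑ i ∈ s, (k+1) := by rw [Finset.sum_const, smul_eq_mul, mul_comm]
          _ = ∑ i ∈ s, ∑ j ∈ s.biUnion T, d i j := by
              refine Finset.sum_congr rfl fun i hi => ?_
              rw [← h1 i hi, hr i]
          _ ≤ ∑ i, ∑ j ∈ s.biUnion T, d i j := by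
              refine Finset.sum_le_sum_of_subset (subset_univ s)
          _ = ∑ j ∈ s.biUnion T, ∑ i, d i j := Finset.sum_comm
          _ = (k+1) * #(s.biUnion T) := by
              rw [Finset.sum_congr rfl fun j _ => hc j, Finset.sum_const, smul_eq_mul, mul_comm]
      exact Nat.le_of_mul_le_mul_left hkey (Nat.succ_pos k)
    obtain ⟨g, hginj, hgmem⟩ := (Finset.all_card_le_biUnion_card_iff_existsInjective' T).mp hall
    have hgbij : Function.Bijective g := Finite.injective_iff_bijective.mp hginj
    set σ0 : Equiv.Perm (Fin n) := Equiv.ofBijective g hgbij with hσ0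
    have hpos : ∀ i, 0 < d i (σ0 i) := by
      intro i
      have := hgmem i
      rw [hT] at this
      exact (mem_filter.mp this).2
    set d' : Fin n → Fin n → ℕ := fun i j => if σ0 i = j then d i j - 1 else d i j with hd'
    have hrowsplit : ∀ (e : Fin n → Fin n → ℕ) (i a : Fin n),
        ∑ j, e i j = e i a + ∑ j ∈ univ \ {a}, e i j := by
      intro e i a
      rw [Finset.sum_eq_sum_sdiff_singleton_add (mem_univ a)]
      ring
    have hr' : ∀ i, ∑ j, d' i j = k := by
      intro i
      have h2 : ∑ j ∈ univ \ {σ0 i}, d' i j = ∑ j ∈ univ \ {σ0 i}, d i j := by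
        refine Finset.sum_congr rfl fun j hj => ?_
        have : σ0 i ≠ j := by
          intro h; exact (Finset.mem_sdiff.mp hj).2 (Finset.mem_singleton.mpr h.symm)
        simp [hd', this]
      have h3 := hrowsplit d' i (σ0 i)
      have h4 := hrowsplit d i (σ0 i)
      have h5 : d' i (σ0 i) = d i (σ0 i) - 1 := by simp [hd']
      have h6 := hpos i
      have h7 := hr i
      omega
    have hc' : ∀ j, ∑ i, d' i j = k := by
      intro j
      have hcolsplit : ∀ (e : Fin n → Fin n → ℕ) (a : Fin n),
          ∑ i, e i j = e a j + ∑ i ∈ univ \ {a}, e i j := by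
        intro e a
        rw [Finset.sum_eq_sum_sdiff_singleton_add (mem_univ a)]
        ring
      set a := σ0.symm j with ha
      have haj : σ0 a = j := Equiv.apply_symm_apply σ0 j
      have h2 : ∑ i ∈ univ \ {a}, d' i j = ∑ i ∈ univ \ {a}, d i j := by
        refine Finset.sum_congr rfl fun i hi => ?_
        have hne : σ0 i ≠ j := by
          intro h
          have : i = a := by rw [ha, ← h, Equiv.symm_apply_apply]
          exact (Finset.mem_sdiff.mp hi).2 (Finset.mem_singleton.mpr this)
        simp [hd', hne]
      have h3 := hcolsplit d' a
      have h4 := hcolsplit d a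
      have h5 : d' a j = d a j - 1 := by simp [hd', haj]
      have h6 : 0 < d a j := haj ▸ hpos a
      have h7 := hc j
      omega
    obtain ⟨σ, hσ⟩ := ih d' hr' hc'
    refine ⟨Fin.cons σ0 σ, fun i j => ?_⟩
    rw [Fin.sum_univ_succ]
    simp only [Fin.cons_zero, Fin.cons_succ]
    rw [← hσ i j]
    by_cases h : σ0 i = j
    · have : 0 < d i j := h ▸ hpos i
      simp [hd', h]
      omega
    · simp [hd', h]

/-- Multiplicity-function form of 2-factorization: if `m i j` (symmetric, zero
on the diagonal) gives each vertex degree `2k`, then `m` is a sum of `k`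
multiplicity functions each giving every vertex degree `2`. -/
theorem multiplicity_two_factorization (n k : ℕ) (hn : 2 ≤ n) (hk : 1 ≤ k)
    (m : Fin n → Fin n → ℕ)
    (hsym : ∀ i j, m i j = m j i) (hdiag : ∀ i, m i i = 0)
    (hdeg : ∀ i, ∑ j, m i j = 2 * k) :
    ∃ f : Fin k → Fin n → Fin n → ℕ,
      (∀ t i j, f t i j = f t j i) ∧
      (∀ t i, f t i i = 0) ∧
      (∀ i j, m i j = ∑ t, f t i j) ∧
      (∀ t i, ∑ j, f t i j = 2) := by
  classical
  have heven : ∀ i, Even (∑ j, m i j) := fun i => by rw [hdeg i]; exact ⟨k, two_mul k⟩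
  obtain ⟨d, hd, hbal⟩ := euler_orient (∑ i, ∑ j, m i j) m le_rfl hsym hdiag heven
  have hrow : ∀ i, ∑ j, d i j = k := by
    intro i
    have h1 : ∑ j, (d i j + d j i) = ∑ j, m i j :=
      Finset.sum_congr rfl fun j _ => hd i j
    rw [Finset.sum_add_distrib, hdeg i] at h1
    have h2 := hbal i
    omega
  have hcol : ∀ j, ∑ i, d i j = k := by
    intro j
    rw [← hbal j]
    exact hrow j
  obtain ⟨σ, hσ⟩ := birkhoff k d hrow hcol
  refine ⟨fun t i j => (if σ t i = j then 1 else 0) + (if σ t j = i then 1 else 0),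
    fun t i j => add_comm _ _, fun t i => ?_, fun i j => ?_, fun t i => ?_⟩
  · have hdii : d i i = 0 := by
      have h1 := hd i i
      have h2 := hdiag i
      omega
    have h3 : ∑ t, (if σ t i = i then (1:ℕ) else 0) = 0 := by
      rw [← hσ i i]
      exact hdii
    have h4 := Finset.sum_eq_zero_iff.mp h3 t (Finset.mem_univ t)
    simp only [ite_eq_right_iff] at h4
    by_cases h : σ t i = i
    · exact absurd (h4 h) one_ne_zero
    · simp [h]
  · rw [Finset.sum_add_distrib, ← hσ i j, ← hσ j i]
    exact (hd i j).symm
  · rw [Finset.sum_add_distrib]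
    have h1 : ∑ j, (if σ t i = j then (1:ℕ) else 0) = 1 := by simp
    have h2 : ∑ j, (if σ t j = i then (1:ℕ) else 0) = 1 := by
      rw [Equiv.sum_comp (σ t) (fun y => if y = i then (1:ℕ) else 0)]
      simp
    rw [h1, h2]
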